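/- The mean squared error of the perturbed quantized value M = Q(g) + s·(N - m·p) satisfies E[(M - g)²] ≤ s²·(1/4 + m·p·(1-p)), where the quantization error and the binomial noise are independent. -/

import Mathlib

lemma binom_sum (m : ℕ) (p : ℝ) :
    ∑ k ∈ Finset.range (m + 1), (m.choose k : ℝ) * p ^ k * (1 - p) ^ (m - k) = 1 := by
  have := bernsteinPolynomial.sum ℝ m
  apply_fun fun q => Polynomial.eval p q at this
  simpa [bernsteinPolynomial, Polynomial.eval_finset_sum, mul_comm, mul_assoc, mul_left_comm]
    using this

lemma binom_var (m : ℕ) (p : ℝ) :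
    ∑ k ∈ Finset.range (m + 1),
      (m.choose k : ℝ) * p ^ k * (1 - p) ^ (m - k) * ((k : ℝ) - (m : ℝ) * p) ^ 2
      = (m : ℝ) * p * (1 - p) := by
  have := bernsteinPolynomial.variance ℝ m
  apply_fun fun q => Polynomial.eval p q at this
  simp only [Polynomial.eval_finset_sum, Polynomial.eval_mul, Polynomial.eval_pow,
    Polynomial.eval_sub, Polynomial.eval_natCast, Polynomial.eval_smul, Polynomial.eval_X,
    Polynomial.eval_one, nsmul_eq_mul, Polynomial.eval_natCast] at this
  rw [← this]
  apply Finset.sum_congr rfl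
  intro k _
  have : Polynomial.eval p (bernsteinPolynomial ℝ m k) =
      (m.choose k : ℝ) * p ^ k * (1 - p) ^ (m - k) := by
    simp [bernsteinPolynomial]
  rw [this]
  ring

/-- MSE of the perturbed quantized value M = Q(g) + s (N - m p):
E[(M - g)²] ≤ s² (1/4 + m p (1 - p)), with the quantization randomness
independent of the binomial noise. -/
theorem stmt6 (G : ℝ) (hG : 0 < G) (l : ℕ) (hl : 2 ≤ l) (r : ℕ) (hr : r < l)
    (s : ℝ) (hs : s = 2 * G / ((l : ℝ) - 1))
    (B : ℕ → ℝ) (hB : ∀ r', B r' = -G + (r' : ℝ) * s)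
    (g : ℝ) (hg1 : B r ≤ g) (hg2 : g ≤ B (r + 1))
    (m : ℕ) (hm : 0 < m) (p : ℝ) (hp0 : 0 ≤ p) (hp1 : p ≤ 1) :
    ∑ k ∈ Finset.range (m + 1),
      (m.choose k : ℝ) * p ^ k * (1 - p) ^ (m - k) *
        ((g - B r) / s * (B (r + 1) + s * ((k : ℝ) - (m : ℝ) * p) - g) ^ 2
          + (B (r + 1) - g) / s * (B r + s * ((k : ℝ) - (m : ℝ) * p) - g) ^ 2)
      ≤ s ^ 2 * (1 / 4 + (m : ℝ) * p * (1 - p)) := by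
  have hl1 : (1 : ℝ) < (l : ℝ) := by
    have : (2 : ℝ) ≤ (l : ℝ) := by exact_mod_cast hl
    linarith
  have hs0 : 0 < s := by rw [hs]; apply div_pos (by linarith) (by linarith)
  set a : ℝ := (g - B r) / s with ha
  have hBr1 : B (r + 1) = B r + s := by
    rw [hB, hB]; push_cast; ring
  have hg : g = B r + s * a := by
    rw [ha, mul_div_assoc', mul_div_cancel_left₀ _ hs0.ne']; ring
  have key : ∀ k ∈ Finset.range (m + 1),
      (m.choose k : ℝ) * p ^ k * (1 - p) ^ (m - k) *
        ((g - B r) / s * (B (r + 1) + s * ((k : ℝ) - (m : ℝ) * p) - g) ^ 2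
          + (B (r + 1) - g) / s * (B r + s * ((k : ℝ) - (m : ℝ) * p) - g) ^ 2)
      = s ^ 2 * ((m.choose k : ℝ) * p ^ k * (1 - p) ^ (m - k) * (a * (1 - a)))
        + s ^ 2 * ((m.choose k : ℝ) * p ^ k * (1 - p) ^ (m - k)
            * ((k : ℝ) - (m : ℝ) * p) ^ 2) := by
    intro k _
    rw [hBr1, hg]
    field_simp
    ring
  rw [Finset.sum_congr rfl key, Finset.sum_add_distrib, ← Finset.mul_sum, ← Finset.mul_sum,
    ← Finset.sum_mul, binom_sum, binom_var]
  have ha14 : a * (1 - a) ≤ 1 / 4 := by nlinarith [sq_nonneg (a - 1 / 2)]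
  nlinarith [sq_nonneg s, sq_nonneg (a - 1/2), mul_le_mul_of_nonneg_left ha14 (sq_nonneg s)]
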